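/- Let P and Q be probability measures with Hellinger distance H(P,Q) ∈ (0,1), and let X be a random variable with finite variance under both. Then (E_P[X]-E_Q[X])² · (1/H(P,Q) - H(P,Q))² / (4 - 2H²(P,Q)) ≤ Var_P(X) + Var_Q(X). -/

import Mathlib

open MeasureTheory ProbabilityTheory
open scoped ENNReal NNReal

section Stmt3Aux

variable {Ω : Type*} [MeasurableSpace Ω] {ν : Measure Ω}

lemma stmt3_integral_withDensity {p : Ω → ℝ} (hpm : Measurable p) (hp0 : ∀ ω, 0 ≤ p ω)
    (g : Ω → ℝ) :
    ∫ ω, g ω ∂(ν.withDensity fun ω => ENNReal.ofReal (p ω)) = ∫ ω, g ω * p ω ∂ν := by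
  have h : (fun ω => ENNReal.ofReal (p ω)) = fun ω => (((p ω).toNNReal : ℝ≥0) : ℝ≥0∞) := rfl
  rw [h, integral_withDensity_eq_integral_smul hpm.real_toNNReal]
  refine integral_congr_ae (Filter.Eventually.of_forall fun ω => ?_)
  simp [NNReal.smul_def, Real.coe_toNNReal _ (hp0 ω), mul_comm]

lemma stmt3_integrable_withDensity {p : Ω → ℝ} (hpm : Measurable p) (hp0 : ∀ ω, 0 ≤ p ω)
    {g : Ω → ℝ} (hg : Integrable g (ν.withDensity fun ω => ENNReal.ofReal (p ω))) :
    Integrable (fun ω => g ω * p ω) ν := by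
  have h : (fun ω => ENNReal.ofReal (p ω)) = fun ω => (((p ω).toNNReal : ℝ≥0) : ℝ≥0∞) := rfl
  rw [h, integrable_withDensity_iff_integrable_smul hpm.real_toNNReal] at hg
  refine hg.congr (Filter.Eventually.of_forall fun ω => ?_)
  simp [NNReal.smul_def, Real.coe_toNNReal _ (hp0 ω), mul_comm]

lemma stmt3_integral_six {f1 f2 f3 f4 f5 f6 : Ω → ℝ} (c1 c2 c3 c4 c5 c6 : ℝ)
    (h1 : Integrable f1 ν) (h2 : Integrable f2 ν) (h3 : Integrable f3 ν)
    (h4 : Integrable f4 ν) (h5 : Integrable f5 ν) (h6 : Integrable f6 ν) :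
    ∫ ω, (c1 * f1 ω + c2 * f2 ω + c3 * f3 ω + c4 * f4 ω + c5 * f5 ω + c6 * f6 ω) ∂ν
      = c1 * ∫ ω, f1 ω ∂ν + c2 * ∫ ω, f2 ω ∂ν + c3 * ∫ ω, f3 ω ∂ν
        + c4 * ∫ ω, f4 ω ∂ν + c5 * ∫ ω, f5 ω ∂ν + c6 * ∫ ω, f6 ω ∂ν := by
  have i1 := h1.const_mul c1
  have i2 := h2.const_mul c2
  have i3 := h3.const_mul c3
  have i4 := h4.const_mul c4
  have i5 := h5.const_mul c5
  have i6 := h6.const_mul c6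
  have j5 : Integrable (fun ω => c5 * f5 ω + c6 * f6 ω) ν := i5.add i6
  have j4 : Integrable (fun ω => c4 * f4 ω + (c5 * f5 ω + c6 * f6 ω)) ν := i4.add j5
  have j3 : Integrable (fun ω => c3 * f3 ω + (c4 * f4 ω + (c5 * f5 ω + c6 * f6 ω))) ν := i3.add j4
  have j2 : Integrable (fun ω => c2 * f2 ω + (c3 * f3 ω + (c4 * f4 ω + (c5 * f5 ω + c6 * f6 ω)))) ν := i2.add j3
  rw [show (fun ω => c1 * f1 ω + c2 * f2 ω + c3 * f3 ω + c4 * f4 ω + c5 * f5 ω + c6 * f6 ω)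
      = fun ω => c1 * f1 ω + (c2 * f2 ω + (c3 * f3 ω + (c4 * f4 ω + (c5 * f5 ω + c6 * f6 ω))))
      from funext fun ω => by ring]
  rw [integral_add i1 j2, integral_add i2 j3, integral_add i3 j4, integral_add i4 j5,
    integral_add i5 i6, integral_const_mul, integral_const_mul, integral_const_mul,
    integral_const_mul, integral_const_mul, integral_const_mul]
  ring

lemma stmt3_gram (ν : Measure Ω) (p q Y : Ω → ℝ)
    (hp0 : ∀ ω, 0 ≤ p ω) (hq0 : ∀ ω, 0 ≤ q ω)
    (i1 : Integrable (fun ω => Y ω ^ 2 * p ω) ν)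
    (i2 : Integrable (fun ω => Y ω * p ω) ν)
    (i3 : Integrable (fun ω => Y ω * (Real.sqrt (p ω) * Real.sqrt (q ω))) ν)
    (i4 : Integrable p ν) (i5 : Integrable q ν)
    (i6 : Integrable (fun ω => Real.sqrt (p ω) * Real.sqrt (q ω)) ν)
    (hp1 : ∫ ω, p ω ∂ν = 1) (hq1 : ∫ ω, q ω ∂ν = 1)
    (lam mu : ℝ) :
    0 ≤ (∫ ω, Y ω ^ 2 * p ω ∂ν) - 2 * lam * (∫ ω, Y ω * p ω ∂ν)
        - 2 * mu * (∫ ω, Y ω * (Real.sqrt (p ω) * Real.sqrt (q ω)) ∂ν)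
        + lam ^ 2 + mu ^ 2
        + 2 * lam * mu * (∫ ω, Real.sqrt (p ω) * Real.sqrt (q ω) ∂ν) := by
  have h0 : 0 ≤ ∫ ω, (Y ω * Real.sqrt (p ω) - lam * Real.sqrt (p ω) - mu * Real.sqrt (q ω)) ^ 2 ∂ν :=
    integral_nonneg fun ω => sq_nonneg _
  have e : (fun ω => (Y ω * Real.sqrt (p ω) - lam * Real.sqrt (p ω) - mu * Real.sqrt (q ω)) ^ 2)
      = fun ω => 1 * (Y ω ^ 2 * p ω) + (-2 * lam) * (Y ω * p ω)
          + (-2 * mu) * (Y ω * (Real.sqrt (p ω) * Real.sqrt (q ω)))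
          + lam ^ 2 * p ω + mu ^ 2 * q ω
          + (2 * lam * mu) * (Real.sqrt (p ω) * Real.sqrt (q ω)) := by
    funext ω
    have h1 := Real.sq_sqrt (hp0 ω)
    have h2 := Real.sq_sqrt (hq0 ω)
    linear_combination (Y ω ^ 2 + lam ^ 2 - 2 * lam * Y ω) * h1 + mu ^ 2 * h2
  rw [e, stmt3_integral_six _ _ _ _ _ _ i1 i2 i3 i4 i5 i6, hp1, hq1] at h0
  exact h0.trans (le_of_eq (by ring))

lemma stmt3_opt {A a s ρ : ℝ} (hW : 0 < 1 - ρ ^ 2)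
    (K : ∀ lam mu : ℝ, 0 ≤ A - 2 * lam * a - 2 * mu * s + lam ^ 2 + mu ^ 2 + 2 * lam * mu * ρ) :
    a ^ 2 - 2 * ρ * a * s + s ^ 2 ≤ A * (1 - ρ ^ 2) := by
  have K1 := K ((a - ρ * s) / (1 - ρ ^ 2)) ((s - ρ * a) / (1 - ρ ^ 2))
  have h3 := mul_nonneg (mul_nonneg hW.le hW.le) K1
  have e : (1 - ρ ^ 2) * (1 - ρ ^ 2) *
      (A - 2 * ((a - ρ * s) / (1 - ρ ^ 2)) * a - 2 * ((s - ρ * a) / (1 - ρ ^ 2)) * s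
        + ((a - ρ * s) / (1 - ρ ^ 2)) ^ 2 + ((s - ρ * a) / (1 - ρ ^ 2)) ^ 2
        + 2 * ((a - ρ * s) / (1 - ρ ^ 2)) * ((s - ρ * a) / (1 - ρ ^ 2)) * ρ)
      = (1 - ρ ^ 2) * (A * (1 - ρ ^ 2) - (a ^ 2 - 2 * ρ * a * s + s ^ 2)) := by
    field_simp
    ring
  rw [e] at h3
  nlinarith [h3, hW]

end Stmt3Aux

set_option maxHeartbeats 2000000 in
/-- Change-of-expectation inequality via the Hellinger distance:
if `H(P,Q) ∈ (0,1)` where `H²(P,Q) = (1/2)∫(√p - √q)² dν`, then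
`(E_P[X]-E_Q[X])² (1/H - H)² / (4 - 2H²) ≤ Var_P(X) + Var_Q(X)`. -/
theorem stmt3 {Ω : Type*} [MeasurableSpace Ω] (ν P Q : Measure Ω)
    (p q : Ω → ℝ) (hpm : Measurable p) (hqm : Measurable q)
    (hp0 : ∀ ω, 0 ≤ p ω) (hq0 : ∀ ω, 0 ≤ q ω)
    (hpint : Integrable p ν) (hqint : Integrable q ν)
    (hP : P = ν.withDensity fun ω => ENNReal.ofReal (p ω))
    (hQ : Q = ν.withDensity fun ω => ENNReal.ofReal (q ω))
    [IsProbabilityMeasure P] [IsProbabilityMeasure Q]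
    (hH0 : 0 < Real.sqrt ((1 / 2) * ∫ ω, (Real.sqrt (p ω) - Real.sqrt (q ω)) ^ 2 ∂ν))
    (hH1 : Real.sqrt ((1 / 2) * ∫ ω, (Real.sqrt (p ω) - Real.sqrt (q ω)) ^ 2 ∂ν) < 1)
    (X : Ω → ℝ) (hXP : MemLp X 2 P) (hXQ : MemLp X 2 Q) :
    (∫ ω, X ω ∂P - ∫ ω, X ω ∂Q) ^ 2 *
        (1 / Real.sqrt ((1 / 2) * ∫ ω, (Real.sqrt (p ω) - Real.sqrt (q ω)) ^ 2 ∂ν) -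
          Real.sqrt ((1 / 2) * ∫ ω, (Real.sqrt (p ω) - Real.sqrt (q ω)) ^ 2 ∂ν)) ^ 2 /
        (4 - 2 * ((1 / 2) * ∫ ω, (Real.sqrt (p ω) - Real.sqrt (q ω)) ^ 2 ∂ν)) ≤
      variance X P + variance X Q := by
  obtain ⟨X', hX'sm, hXX'⟩ := hXP.1
  obtain ⟨X'', hX''sm, hXX''⟩ := hXQ.1
  have hX'm : Measurable X' := hX'sm.measurable
  have hX''m : Measurable X'' := hX''sm.measurable
  have hum : Measurable fun ω => Real.sqrt (p ω) := hpm.sqrt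
  have hvm : Measurable fun ω => Real.sqrt (q ω) := hqm.sqrt
  -- a.e. identification of X with measurable versions
  have hE1 : ∀ᵐ ω ∂ν, p ω ≠ 0 → X ω = X' ω := by
    have h0 : ∀ᵐ ω ∂(ν.withDensity fun ω => ENNReal.ofReal (p ω)), X ω = X' ω := hP ▸ hXX'
    have h := (ae_withDensity_iff' hpm.ennreal_ofReal.aemeasurable).mp h0
    filter_upwards [h] with ω h hne
    refine h ?_
    simp only [ne_eq, ENNReal.ofReal_eq_zero, not_le]
    exact lt_of_le_of_ne (hp0 ω) (Ne.symm hne)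
  have hE2 : ∀ᵐ ω ∂ν, q ω ≠ 0 → X ω = X'' ω := by
    have h0 : ∀ᵐ ω ∂(ν.withDensity fun ω => ENNReal.ofReal (q ω)), X ω = X'' ω := hQ ▸ hXX''
    have h := (ae_withDensity_iff' hqm.ennreal_ofReal.aemeasurable).mp h0
    filter_upwards [h] with ω h hne
    refine h ?_
    simp only [ne_eq, ENNReal.ofReal_eq_zero, not_le]
    exact lt_of_le_of_ne (hq0 ω) (Ne.symm hne)
  have eq1 : (fun ω => X ω * p ω) =ᵐ[ν] fun ω => X' ω * p ω := by
    filter_upwards [hE1] with ω h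
    by_cases hp : p ω = 0
    · simp [hp]
    · rw [h hp]
  have eq2 : (fun ω => X ω ^ 2 * p ω) =ᵐ[ν] fun ω => X' ω ^ 2 * p ω := by
    filter_upwards [hE1] with ω h
    by_cases hp : p ω = 0
    · simp [hp]
    · rw [h hp]
  have eq3 : (fun ω => X ω * (Real.sqrt (p ω) * Real.sqrt (q ω)))
      =ᵐ[ν] fun ω => X' ω * (Real.sqrt (p ω) * Real.sqrt (q ω)) := by
    filter_upwards [hE1] with ω h
    by_cases hp : p ω = 0
    · simp [hp]
    · rw [h hp]
  have eq4 : (fun ω => X ω * q ω) =ᵐ[ν] fun ω => X'' ω * q ω := by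
    filter_upwards [hE2] with ω h
    by_cases hq : q ω = 0
    · simp [hq]
    · rw [h hq]
  have eq5 : (fun ω => X ω ^ 2 * q ω) =ᵐ[ν] fun ω => X'' ω ^ 2 * q ω := by
    filter_upwards [hE2] with ω h
    by_cases hq : q ω = 0
    · simp [hq]
    · rw [h hq]
  have eq6 : (fun ω => X ω * (Real.sqrt (p ω) * Real.sqrt (q ω)))
      =ᵐ[ν] fun ω => X'' ω * (Real.sqrt (p ω) * Real.sqrt (q ω)) := by
    filter_upwards [hE2] with ω h
    by_cases hq : q ω = 0
    · simp [hq]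
    · rw [h hq]
  -- abbreviations
  set a := ∫ ω, X' ω * p ω ∂ν with ha
  set b := ∫ ω, X'' ω * q ω ∂ν with hb
  set A := ∫ ω, X' ω ^ 2 * p ω ∂ν with hA
  set B := ∫ ω, X'' ω ^ 2 * q ω ∂ν with hB
  set s := ∫ ω, X' ω * (Real.sqrt (p ω) * Real.sqrt (q ω)) ∂ν with hs
  set ρ := ∫ ω, Real.sqrt (p ω) * Real.sqrt (q ω) ∂ν with hρ
  -- transfer of integrals
  have haP : ∫ ω, X ω ∂P = a := by
    rw [hP, stmt3_integral_withDensity hpm hp0 X, ha]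
    exact integral_congr_ae eq1
  have hbQ : ∫ ω, X ω ∂Q = b := by
    rw [hQ, stmt3_integral_withDensity hqm hq0 X, hb]
    exact integral_congr_ae eq4
  have hAP : ∫ ω, X ω ^ 2 ∂P = A := by
    rw [hP, stmt3_integral_withDensity hpm hp0 (fun ω => X ω ^ 2), hA]
    exact integral_congr_ae eq2
  have hBQ : ∫ ω, X ω ^ 2 ∂Q = B := by
    rw [hQ, stmt3_integral_withDensity hqm hq0 (fun ω => X ω ^ 2), hB]
    exact integral_congr_ae eq5
  have hVP : variance X P = A - a ^ 2 := by
    rw [variance_eq_sub hXP]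
    have h2 : P[X ^ 2] = A := by
      simp only [Pi.pow_apply]
      exact hAP
    rw [h2, haP]
  have hVQ : variance X Q = B - b ^ 2 := by
    rw [variance_eq_sub hXQ]
    have h2 : Q[X ^ 2] = B := by
      simp only [Pi.pow_apply]
      exact hBQ
    rw [h2, hbQ]
  -- integrabilities over ν
  have iX2p : Integrable (fun ω => X' ω ^ 2 * p ω) ν := by
    refine (stmt3_integrable_withDensity hpm hp0 ?_).congr eq2
    rw [← hP]; exact hXP.integrable_sq
  have iXp : Integrable (fun ω => X' ω * p ω) ν := by
    refine (stmt3_integrable_withDensity hpm hp0 ?_).congr eq1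
    rw [← hP]; exact hXP.integrable one_le_two
  have iX2q : Integrable (fun ω => X'' ω ^ 2 * q ω) ν := by
    refine (stmt3_integrable_withDensity hqm hq0 ?_).congr eq5
    rw [← hQ]; exact hXQ.integrable_sq
  have iXq : Integrable (fun ω => X'' ω * q ω) ν := by
    refine (stmt3_integrable_withDensity hqm hq0 ?_).congr eq4
    rw [← hQ]; exact hXQ.integrable one_le_two
  have iuv : Integrable (fun ω => Real.sqrt (p ω) * Real.sqrt (q ω)) ν := by
    refine Integrable.mono ((hpint.add hqint).div_const 2)
      (hum.mul hvm).aestronglyMeasurable (Filter.Eventually.of_forall fun ω => ?_)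
    simp only [Pi.add_apply, Real.norm_eq_abs]
    have h1 := Real.sq_sqrt (hp0 ω)
    have h2 := Real.sq_sqrt (hq0 ω)
    have h3 := Real.sqrt_nonneg (p ω)
    have h4 := Real.sqrt_nonneg (q ω)
    rw [abs_of_nonneg (mul_nonneg h3 h4),
      abs_of_nonneg (div_nonneg (add_nonneg (hp0 ω) (hq0 ω)) (by norm_num))]
    nlinarith [sq_nonneg (Real.sqrt (p ω) - Real.sqrt (q ω))]
  have iX'uv : Integrable (fun ω => X' ω * (Real.sqrt (p ω) * Real.sqrt (q ω))) ν := by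
    refine Integrable.mono ((iX2p.add hqint).div_const 2)
      (hX'm.mul (hum.mul hvm)).aestronglyMeasurable (Filter.Eventually.of_forall fun ω => ?_)
    simp only [Pi.add_apply, Real.norm_eq_abs]
    have h1 := Real.sq_sqrt (hp0 ω)
    have h2 := Real.sq_sqrt (hq0 ω)
    have h3 := Real.sqrt_nonneg (p ω)
    have h4 := Real.sqrt_nonneg (q ω)
    have h5 := abs_nonneg (X' ω)
    have h6 := sq_abs (X' ω)
    rw [abs_mul, abs_of_nonneg (mul_nonneg h3 h4),
      abs_of_nonneg (div_nonneg (add_nonneg (by nlinarith [sq_nonneg (X' ω)]) (hq0 ω)) (by norm_num))]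
    nlinarith [sq_nonneg (|X' ω| * Real.sqrt (p ω) - Real.sqrt (q ω))]
  have iX''uv : Integrable (fun ω => X'' ω * (Real.sqrt (p ω) * Real.sqrt (q ω))) ν :=
    iX'uv.congr (eq3.symm.trans eq6)
  -- total masses
  have hp1 : ∫ ω, p ω ∂ν = 1 := by
    have h2 : (ν.withDensity fun ω => ENNReal.ofReal (p ω)) Set.univ = 1 := by
      rw [← hP]; exact measure_univ
    rw [withDensity_apply _ MeasurableSet.univ, setLIntegral_univ] at h2
    have h1 : ENNReal.ofReal (∫ ω, p ω ∂ν) = 1 := by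
      rw [MeasureTheory.ofReal_integral_eq_lintegral_ofReal hpint
        (Filter.Eventually.of_forall hp0)]
      exact h2
    rw [← ENNReal.ofReal_one] at h1
    exact (ENNReal.ofReal_eq_ofReal_iff (integral_nonneg hp0) zero_le_one).mp h1
  have hq1 : ∫ ω, q ω ∂ν = 1 := by
    have h2 : (ν.withDensity fun ω => ENNReal.ofReal (q ω)) Set.univ = 1 := by
      rw [← hQ]; exact measure_univ
    rw [withDensity_apply _ MeasurableSet.univ, setLIntegral_univ] at h2
    have h1 : ENNReal.ofReal (∫ ω, q ω ∂ν) = 1 := by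
      rw [MeasureTheory.ofReal_integral_eq_lintegral_ofReal hqint
        (Filter.Eventually.of_forall hq0)]
      exact h2
    rw [← ENNReal.ofReal_one] at h1
    exact (ENNReal.ofReal_eq_ofReal_iff (integral_nonneg hq0) zero_le_one).mp h1
  -- the Hellinger integral
  have hIval : ∫ ω, (Real.sqrt (p ω) - Real.sqrt (q ω)) ^ 2 ∂ν = 2 - 2 * ρ := by
    have e : (fun ω => (Real.sqrt (p ω) - Real.sqrt (q ω)) ^ 2)
        = fun ω => p ω + q ω + (-2) * (Real.sqrt (p ω) * Real.sqrt (q ω)) := by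
      funext ω
      have h1 := Real.sq_sqrt (hp0 ω)
      have h2 := Real.sq_sqrt (hq0 ω)
      linear_combination h1 + h2
    have hpq : Integrable (fun ω => p ω + q ω) ν := hpint.add hqint
    rw [e, integral_add hpq (iuv.const_mul (-2)), integral_add hpint hqint,
      integral_const_mul, hp1, hq1, ← hρ]
    ring
  have hD0 : 0 < 1 / 2 * ∫ ω, (Real.sqrt (p ω) - Real.sqrt (q ω)) ^ 2 ∂ν :=
    Real.sqrt_pos.mp hH0
  have hD1 : 1 / 2 * ∫ ω, (Real.sqrt (p ω) - Real.sqrt (q ω)) ^ 2 ∂ν < 1 := by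
    nlinarith [Real.sq_sqrt hD0.le,
      Real.sqrt_nonneg (1 / 2 * ∫ ω, (Real.sqrt (p ω) - Real.sqrt (q ω)) ^ 2 ∂ν)]
  have hIρ : 1 / 2 * ∫ ω, (Real.sqrt (p ω) - Real.sqrt (q ω)) ^ 2 ∂ν = 1 - ρ := by
    rw [hIval]; ring
  have hρ0 : 0 < ρ := by rw [hIρ] at hD1; linarith
  have hρ1 : ρ < 1 := by rw [hIρ] at hD0; linarith
  have hW : 0 < 1 - ρ ^ 2 := by
    have h1 : (0:ℝ) < 1 - ρ := by linarith
    have h2 : (0:ℝ) < 1 + ρ := by linarith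
    have h3 := mul_pos h1 h2
    linarith [h3]
  -- Gram inequalities
  have K1 : ∀ lam mu : ℝ, 0 ≤ A - 2 * lam * a - 2 * mu * s + lam ^ 2 + mu ^ 2
      + 2 * lam * mu * ρ := by
    intro lam mu
    have h := stmt3_gram ν p q X' hp0 hq0 iX2p iXp iX'uv hpint hqint iuv hp1 hq1 lam mu
    rw [← hA, ← ha, ← hs, ← hρ] at h
    exact h
  have swap1 : (fun ω => X'' ω * (Real.sqrt (q ω) * Real.sqrt (p ω)))
      = fun ω => X'' ω * (Real.sqrt (p ω) * Real.sqrt (q ω)) := by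
    funext ω; ring
  have swap2 : (fun ω => Real.sqrt (q ω) * Real.sqrt (p ω))
      = fun ω => Real.sqrt (p ω) * Real.sqrt (q ω) := by
    funext ω; ring
  have hs2 : ∫ ω, X'' ω * (Real.sqrt (p ω) * Real.sqrt (q ω)) ∂ν = s := by
    rw [hs]
    exact integral_congr_ae (eq6.symm.trans eq3)
  have K2 : ∀ lam mu : ℝ, 0 ≤ B - 2 * lam * b - 2 * mu * s + lam ^ 2 + mu ^ 2
      + 2 * lam * mu * ρ := by
    intro lam mu
    have iX''vu : Integrable (fun ω => X'' ω * (Real.sqrt (q ω) * Real.sqrt (p ω))) ν :=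
      iX''uv.congr (Filter.Eventually.of_forall fun ω => by ring)
    have ivu : Integrable (fun ω => Real.sqrt (q ω) * Real.sqrt (p ω)) ν :=
      iuv.congr (Filter.Eventually.of_forall fun ω => by ring)
    have h := stmt3_gram ν q p X'' hq0 hp0 iX2q iXq iX''vu hqint hpint
      ivu hq1 hp1 lam mu
    rw [swap1, swap2, hs2, ← hB, ← hb, ← hρ] at h
    exact h
  have G1 : a ^ 2 - 2 * ρ * a * s + s ^ 2 ≤ A * (1 - ρ ^ 2) := stmt3_opt hW K1
  have G2 : b ^ 2 - 2 * ρ * b * s + s ^ 2 ≤ B * (1 - ρ ^ 2) := stmt3_opt hW K2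
  -- final algebra
  rw [haP, hbQ, hVP, hVQ, hIρ]
  have htne : Real.sqrt (1 - ρ) ≠ 0 := ne_of_gt (Real.sqrt_pos.mpr (by linarith))
  have ht : Real.sqrt (1 - ρ) ^ 2 = 1 - ρ := Real.sq_sqrt (by linarith)
  have hfrac : (1 / Real.sqrt (1 - ρ) - Real.sqrt (1 - ρ)) ^ 2 = ρ ^ 2 / (1 - ρ) := by
    have h : 1 / Real.sqrt (1 - ρ) - Real.sqrt (1 - ρ) = ρ / Real.sqrt (1 - ρ) := by
      field_simp
      linear_combination -ht
    rw [h, div_pow, ht]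
  rw [hfrac]
  rw [div_le_iff₀ (by linarith : (0:ℝ) < 4 - 2 * (1 - ρ)), ← mul_div_assoc,
    div_le_iff₀ (by linarith : (0:ℝ) < 1 - ρ)]
  nlinarith [G1, G2, sq_nonneg (2 * s - ρ * (a + b)), hρ0, hρ1]
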